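/- For a real number t with 0 < t < 1, there exists a constant C > 0 such that for all real X, the real part of Li₂(e^{2πi(t+Xi)})/(2πi) lies within distance C of the function which equals 0 if X ≥ 0 and equals 2π(t - 1/2)X if X < 0. -/

import Mathlib

open Complex

/-- The dilogarithm, defined by integrating `-log(1-x)/x` along the segment from `0` to `z`. -/
noncomputable def dilog (z : ℂ) : ℂ :=
  -∫ t in (0:ℝ)..1, Complex.log (1 - (t:ℂ) * z) / t

namespace DilogAux

lemma arctan_lip (a b : ℝ) : |Real.arctan a - Real.arctan b| ≤ |a - b| := by
  have h : LipschitzWith 1 Real.arctan := by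
    apply lipschitzWith_of_nnnorm_deriv_le Real.differentiable_arctan
    intro x
    rw [Real.deriv_arctan]
    have h1 : |1 / (1 + x ^ 2)| ≤ 1 := by
      rw [_root_.abs_of_nonneg (by positivity : (0:ℝ) ≤ 1 / (1 + x^2))]
      rw [div_le_one (by positivity)]
      nlinarith [sq_nonneg x]
    exact_mod_cast h1
  have := h.dist_le_mul a b
  simpa [Real.dist_eq] using this

lemma arg_of_im_neg' {w : ℂ} (h : w.im < 0) :
    Real.arctan (w.re / w.im) = -(Real.pi/2) - w.arg := by
  have ha1 : -Real.pi < w.arg := Complex.neg_pi_lt_arg w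
  have ha2 : w.arg < 0 := Complex.arg_neg_iff.mpr h
  have key : Real.tan (-(Real.pi/2) - w.arg) = w.re / w.im := by
    have : -(Real.pi/2) - w.arg = (Real.pi/2 - w.arg) - Real.pi := by ring
    rw [this, Real.tan_sub_pi, Real.tan_pi_div_two_sub, Complex.tan_arg, inv_div]
  rw [← key, Real.arctan_tan] <;> linarith

lemma arg_of_im_pos' {w : ℂ} (h : 0 < w.im) :
    Real.arctan (w.re / w.im) = Real.pi/2 - w.arg := by
  have ha1 : 0 < w.arg := by
    rcases lt_or_eq_of_le (Complex.arg_nonneg_iff.mpr h.le) with h' | h'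
    · exact h'
    · exfalso
      have := Complex.arg_eq_zero_iff.mp h'.symm
      linarith [this.2]
  have ha2 : w.arg < Real.pi := by
    rcases lt_or_eq_of_le (Complex.arg_le_pi w) with h' | h'
    · exact h'
    · exfalso
      have := Complex.arg_eq_pi_iff.mp h'
      linarith [this.2]
  have key : Real.tan (Real.pi/2 - w.arg) = w.re / w.im := by
    rw [Real.tan_pi_div_two_sub, Complex.tan_arg, inv_div]
  rw [← key, Real.arctan_tan] <;> linarith

lemma abs_arg_le {w : ℂ} (hre : 0 < w.re) : |w.arg| ≤ |w.im| / w.re := by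
  have h1 : |w.arg| < Real.pi / 2 := Complex.abs_arg_lt_pi_div_two_iff.mpr (Or.inl hre)
  have h2 : w.arg = Real.arctan (w.im / w.re) := by
    rw [← Complex.tan_arg, Real.arctan_tan (abs_lt.mp h1).1 (abs_lt.mp h1).2]
  rw [h2]
  calc |Real.arctan (w.im / w.re)| ≤ |w.im / w.re| := by
        simpa using arctan_lip (w.im / w.re) 0
    _ = |w.im| / w.re := by rw [abs_div, abs_of_pos hre]

noncomputable def cc (θ : ℝ) : ℂ := Complex.exp (θ * Complex.I)

lemma w_re (θ u : ℝ) : (1 - u * cc θ).re = 1 - u * Real.cos θ := by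
  simp [cc, Complex.exp_ofReal_mul_I_re, Complex.exp_ofReal_mul_I_im]

lemma w_im (θ u : ℝ) : (1 - u * cc θ).im = -(u * Real.sin θ) := by
  simp [cc, Complex.exp_ofReal_mul_I_re, Complex.exp_ofReal_mul_I_im]

lemma sin_theta_pi {θ : ℝ} (h0 : 0 < θ) (h2 : θ < 2 * Real.pi) (hs : Real.sin θ = 0) :
    θ = Real.pi := by
  by_contra hne
  rcases lt_or_gt_of_ne hne with h | h
  · exact absurd hs (ne_of_gt (Real.sin_pos_of_pos_of_lt_pi h0 h))
  · have h1 : 0 < θ - Real.pi := by linarith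
    have h2' : θ - Real.pi < Real.pi := by linarith
    have := Real.sin_pos_of_pos_of_lt_pi h1 h2'
    rw [Real.sin_sub_pi] at this
    linarith

lemma cos_lt_one {θ : ℝ} (h0 : 0 < θ) (h2 : θ < 2 * Real.pi) : Real.cos θ < 1 := by
  rcases lt_or_eq_of_le (Real.cos_le_one θ) with h | h
  · exact h
  · exfalso
    have := (Real.cos_eq_one_iff_of_lt_of_lt (by linarith [Real.pi_pos] : -(2*Real.pi) < θ) h2).mp h
    linarith

lemma slit {θ : ℝ} (h0 : 0 < θ) (h2 : θ < 2 * Real.pi) {u : ℝ} (hu : 0 ≤ u) :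
    1 - (u : ℂ) * cc θ ∈ Complex.slitPlane := by
  rw [Complex.mem_slitPlane_iff, w_re, w_im]
  by_cases hs : Real.sin θ = 0
  · left
    have hθ : θ = Real.pi := sin_theta_pi h0 h2 hs
    rw [hθ, Real.cos_pi]
    nlinarith
  · rcases eq_or_lt_of_le hu with h | h
    · left; rw [← h]; norm_num
    · right
      simp only [neg_ne_zero]
      exact mul_ne_zero (ne_of_gt h) hs


noncomputable def phi (θ : ℝ) (u : ℝ) : ℂ := Complex.log (1 - (u : ℂ) * cc θ) / u

noncomputable def psi (θ : ℝ) (u : ℝ) : ℂ :=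
  if u = 0 then -cc θ else Complex.log (1 - (u : ℂ) * cc θ) / u

lemma psi_eq_phi {θ u : ℝ} (hu : u ≠ 0) : psi θ u = phi θ u := by
  simp [psi, phi, hu]

lemma hasDerivAt_G (θ : ℝ) : HasDerivAt (fun u : ℝ => Complex.log (1 - (u : ℂ) * cc θ))
    (-cc θ) 0 := by
  have h1 : HasDerivAt (fun w : ℂ => Complex.log (1 - w * cc θ)) (-cc θ) 0 := by
    have hin : HasDerivAt (fun w : ℂ => 1 - w * cc θ) (-(1 * cc θ)) 0 :=
      ((hasDerivAt_id (0:ℂ)).mul_const (cc θ)).const_sub 1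
    have hlog : HasDerivAt Complex.log ((1 - (0:ℂ) * cc θ))⁻¹ (1 - (0:ℂ) * cc θ) := by
      apply Complex.hasDerivAt_log
      simp
    have := hlog.comp (0:ℂ) hin
    simp only [Function.comp_def] at this
    exact this.congr_deriv (by simp)
  simpa using h1.comp_ofReal

lemma continuousOn_psi {θ : ℝ} (h0 : 0 < θ) (h2 : θ < 2 * Real.pi) :
    ContinuousOn (psi θ) (Set.Ici 0) := by
  intro u hu
  rcases eq_or_lt_of_le (Set.mem_Ici.mp hu) with h | h
  · -- u = 0
    subst h
    apply ContinuousAt.continuousWithinAt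
    rw [← continuousWithinAt_compl_self]
    have hslope := (hasDerivAt_iff_tendsto_slope).mp (hasDerivAt_G θ)
    have heq : ∀ v : ℝ, v ≠ 0 → slope (fun u : ℝ => Complex.log (1 - (u : ℂ) * cc θ)) 0 v
        = psi θ v := by
      intro v hv
      rw [slope_def_module, psi, if_neg hv]
      simp only [Complex.log_one, sub_zero, Complex.ofReal_zero, zero_mul]
      rw [Complex.real_smul, Complex.ofReal_inv, div_eq_inv_mul]
    have : Filter.Tendsto (psi θ) (nhdsWithin 0 {(0:ℝ)}ᶜ) (nhds (-cc θ)) := by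
      apply hslope.congr'
      filter_upwards [self_mem_nhdsWithin] with v hv
      exact heq v hv
    have hpsi0 : psi θ 0 = -cc θ := by simp [psi]
    rw [ContinuousWithinAt, hpsi0]
    exact this
  · -- u > 0
    apply ContinuousAt.continuousWithinAt
    have hne : ∀ᶠ v in nhds u, v ≠ 0 := eventually_ne_nhds (ne_of_gt h)
    have heq : ∀ᶠ v in nhds u, (fun v : ℝ => Complex.log (1 - (v : ℂ) * cc θ) / v) v = psi θ v := by
      filter_upwards [hne] with v hv
      simp [psi, if_neg hv]
    apply ContinuousAt.congr _ heq
    apply ContinuousAt.div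
    · have hg : ContinuousAt (fun v : ℝ => 1 - (v:ℂ) * cc θ) u :=
        Continuous.continuousAt (by continuity)
      have := ContinuousAt.comp (g := Complex.log) (x := u)
        (f := fun v : ℝ => 1 - (v:ℂ) * cc θ) (continuousAt_clog (slit h0 h2 (le_of_lt h))) hg
      exact this
    · exact Complex.continuous_ofReal.continuousAt
    · exact_mod_cast ne_of_gt h

lemma intervalIntegrable_psi {θ : ℝ} (h0 : 0 < θ) (h2 : θ < 2 * Real.pi) {R : ℝ} (hR : 0 ≤ R) :
    IntervalIntegrable (psi θ) MeasureTheory.volume 0 R :=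
  ((continuousOn_psi h0 h2).mono (by
    rw [Set.uIcc_of_le hR]
    exact fun x hx => hx.1)).intervalIntegrable

lemma psi_ae_phi (θ : ℝ) : psi θ =ᵐ[MeasureTheory.volume] phi θ := by
  have h0 : (MeasureTheory.volume : MeasureTheory.Measure ℝ) {0} = 0 := MeasureTheory.measure_singleton 0
  rw [Filter.EventuallyEq]
  rw [MeasureTheory.ae_iff]
  apply MeasureTheory.measure_mono_null _ h0
  intro x hx
  simp only [Set.mem_setOf_eq] at hx
  by_contra hx0
  exact hx (psi_eq_phi (by simpa using hx0) ▸ rfl)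

lemma intervalIntegrable_phi {θ : ℝ} (h0 : 0 < θ) (h2 : θ < 2 * Real.pi) {R : ℝ} (hR : 0 ≤ R) :
    IntervalIntegrable (phi θ) MeasureTheory.volume 0 R := by
  have h := intervalIntegrable_psi h0 h2 hR
  exact ⟨h.1.congr (MeasureTheory.ae_restrict_of_ae (psi_ae_phi θ)),
         h.2.congr (MeasureTheory.ae_restrict_of_ae (psi_ae_phi θ))⟩


lemma intervalIntegral_im {f : ℝ → ℂ} {a b : ℝ}
    (hf : IntervalIntegrable f MeasureTheory.volume a b) :
    (∫ x in a..b, f x).im = ∫ x in a..b, (f x).im := by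
  have h1 := _root_.integral_im hf.1
  have h2 := _root_.integral_im hf.2
  simp only [RCLike.im_to_complex] at h1 h2
  simp only [intervalIntegral, Complex.sub_im, ← h1, ← h2]

lemma near_bound {θ : ℝ} (h0 : 0 < θ) (h2 : θ < 2 * Real.pi) {u : ℝ}
    (hu0 : 0 < u) (hu1 : u ≤ 1) :
    |(1 - u * cc θ).arg| ≤ (min 1 (1 - Real.cos θ))⁻¹ * u := by
  set δ := min 1 (1 - Real.cos θ) with hδdef
  have hδ : 0 < δ := lt_min one_pos (by linarith [cos_lt_one h0 h2])
  have hre : δ ≤ (1 - (u:ℝ) * cc θ).re := by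
    rw [w_re]
    rcases le_or_gt 0 (Real.cos θ) with h | h
    · have : u * Real.cos θ ≤ Real.cos θ := by nlinarith
      calc δ ≤ 1 - Real.cos θ := min_le_right _ _
        _ ≤ 1 - u * Real.cos θ := by linarith
    · have : u * Real.cos θ ≤ 0 := by nlinarith
      calc δ ≤ 1 := min_le_left _ _
        _ ≤ 1 - u * Real.cos θ := by linarith
  have hre0 : 0 < (1 - (u:ℝ) * cc θ).re := lt_of_lt_of_le hδ hre
  calc |(1 - (u:ℝ) * cc θ).arg| ≤ |(1 - (u:ℝ) * cc θ).im| / (1 - (u:ℝ) * cc θ).re :=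
        abs_arg_le hre0
    _ ≤ u / δ := by
        apply div_le_div₀ (by positivity) _ hδ hre
        rw [w_im, abs_neg, abs_mul, abs_of_pos hu0]
        calc u * |Real.sin θ| ≤ u * 1 := by
              have h1 : |Real.sin θ| ≤ 1 := abs_le.mpr ⟨Real.neg_one_le_sin θ, Real.sin_le_one θ⟩
              nlinarith
          _ = u := mul_one u
    _ = δ⁻¹ * u := by rw [div_eq_inv_mul]

lemma far_bound {θ : ℝ} (h0 : 0 < θ) (h2 : θ < 2 * Real.pi) :
    ∃ K : ℝ, 0 < K ∧ ∀ u : ℝ, 1 ≤ u → |(1 - u * cc θ).arg - (θ - Real.pi)| ≤ K / u := by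
  rcases lt_trichotomy θ Real.pi with hθ | hθ | hθ
  · -- sin θ > 0
    have hs : 0 < Real.sin θ := Real.sin_pos_of_pos_of_lt_pi h0 hθ
    refine ⟨1 / Real.sin θ, by positivity, fun u hu => ?_⟩
    have hu0 : 0 < u := lt_of_lt_of_le one_pos hu
    have him : (1 - (u:ℝ) * cc θ).im < 0 := by
      rw [w_im]; nlinarith
    have harg : (1 - (u:ℝ) * cc θ).arg
        = -(Real.pi/2) - Real.arctan ((1 - (u:ℝ) * cc θ).re / (1 - (u:ℝ) * cc θ).im) := by
      have := arg_of_im_neg' him; linarith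
    have htp : θ - Real.pi = -(Real.pi/2) - Real.arctan (Real.cos θ / Real.sin θ) := by
      have h1 : Real.cos θ / Real.sin θ = Real.tan (Real.pi/2 - θ) := by
        rw [Real.tan_eq_sin_div_cos, Real.sin_pi_div_two_sub, Real.cos_pi_div_two_sub]
      rw [h1, Real.arctan_tan (by linarith) (by linarith)]
      ring
    rw [harg, htp]
    have key : |Real.arctan (Real.cos θ / Real.sin θ)
        - Real.arctan ((1 - (u:ℝ) * cc θ).re / (1 - (u:ℝ) * cc θ).im)| ≤ 1 / Real.sin θ / u := by
      calc |Real.arctan (Real.cos θ / Real.sin θ)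
          - Real.arctan ((1 - (u:ℝ) * cc θ).re / (1 - (u:ℝ) * cc θ).im)|
          ≤ |Real.cos θ / Real.sin θ - (1 - (u:ℝ) * cc θ).re / (1 - (u:ℝ) * cc θ).im| :=
            arctan_lip _ _
        _ = 1 / Real.sin θ / u := by
            rw [w_re, w_im]
            have hsne : Real.sin θ ≠ 0 := ne_of_gt hs
            have hune : u ≠ 0 := ne_of_gt hu0
            have heq : Real.cos θ / Real.sin θ - (1 - u * Real.cos θ) / -(u * Real.sin θ)
                = 1 / (Real.sin θ * u) := by
              field_simp
              ring
            rw [heq, _root_.abs_of_pos (div_pos one_pos (mul_pos hs hu0)), div_div]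
    calc |(-(Real.pi/2) - Real.arctan ((1 - (u:ℝ) * cc θ).re / (1 - (u:ℝ) * cc θ).im))
        - (-(Real.pi/2) - Real.arctan (Real.cos θ / Real.sin θ))|
        = |Real.arctan (Real.cos θ / Real.sin θ)
          - Real.arctan ((1 - (u:ℝ) * cc θ).re / (1 - (u:ℝ) * cc θ).im)| := by
          congr 1; ring
      _ ≤ 1 / Real.sin θ / u := key
  · -- θ = π
    refine ⟨1, one_pos, fun u hu => ?_⟩
    have hu0 : 0 < u := lt_of_lt_of_le one_pos hu
    have hcc : cc θ = -1 := by
      rw [hθ, cc]; exact_mod_cast Complex.exp_pi_mul_I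
    have : (1 : ℂ) - (u:ℝ) * cc θ = ((1 + u : ℝ) : ℂ) := by
      rw [hcc]; push_cast; ring
    rw [this, Complex.arg_ofReal_of_nonneg (by linarith), hθ]
    have h00 : |(0:ℝ) - (Real.pi - Real.pi)| = 0 := by simp
    rw [h00]
    exact le_of_lt (div_pos one_pos hu0)
  · -- sin θ < 0
    have hs' : 0 < Real.sin (θ - Real.pi) :=
      Real.sin_pos_of_pos_of_lt_pi (by linarith) (by linarith)
    have hs : Real.sin θ < 0 := by
      rw [Real.sin_sub_pi] at hs'; linarith
    refine ⟨1 / (-Real.sin θ), div_pos one_pos (by linarith), fun u hu => ?_⟩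
    have hu0 : 0 < u := lt_of_lt_of_le one_pos hu
    have him : 0 < (1 - (u:ℝ) * cc θ).im := by
      rw [w_im]; nlinarith
    have harg : (1 - (u:ℝ) * cc θ).arg
        = Real.pi/2 - Real.arctan ((1 - (u:ℝ) * cc θ).re / (1 - (u:ℝ) * cc θ).im) := by
      have := arg_of_im_pos' him; linarith
    have htp : θ - Real.pi = Real.pi/2 - Real.arctan (Real.cos θ / Real.sin θ) := by
      have h1 : Real.cos θ / Real.sin θ = Real.tan (3 * Real.pi / 2 - θ) := by
        have : (3 * Real.pi / 2 - θ) = (Real.pi / 2 - θ) + Real.pi := by ring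
        rw [this, Real.tan_periodic]
        rw [Real.tan_eq_sin_div_cos, Real.sin_pi_div_two_sub, Real.cos_pi_div_two_sub]
      rw [h1, Real.arctan_tan (by linarith) (by linarith)]
      ring
    rw [harg, htp]
    have key : |Real.arctan (Real.cos θ / Real.sin θ)
        - Real.arctan ((1 - (u:ℝ) * cc θ).re / (1 - (u:ℝ) * cc θ).im)| ≤ 1 / (-Real.sin θ) / u := by
      calc |Real.arctan (Real.cos θ / Real.sin θ)
          - Real.arctan ((1 - (u:ℝ) * cc θ).re / (1 - (u:ℝ) * cc θ).im)|
          ≤ |Real.cos θ / Real.sin θ - (1 - (u:ℝ) * cc θ).re / (1 - (u:ℝ) * cc θ).im| :=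
            arctan_lip _ _
        _ = 1 / (-Real.sin θ) / u := by
            rw [w_re, w_im]
            have hsne : Real.sin θ ≠ 0 := ne_of_lt hs
            have hune : u ≠ 0 := ne_of_gt hu0
            have heq : Real.cos θ / Real.sin θ - (1 - u * Real.cos θ) / -(u * Real.sin θ)
                = 1 / (Real.sin θ * u) := by
              field_simp
              ring
            rw [heq, _root_.abs_of_neg (by
              apply div_neg_of_pos_of_neg one_pos
              nlinarith)]
            rw [div_div, neg_mul, div_neg]
    calc |(Real.pi/2 - Real.arctan ((1 - (u:ℝ) * cc θ).re / (1 - (u:ℝ) * cc θ).im))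
        - (Real.pi/2 - Real.arctan (Real.cos θ / Real.sin θ))|
        = |Real.arctan (Real.cos θ / Real.sin θ)
          - Real.arctan ((1 - (u:ℝ) * cc θ).re / (1 - (u:ℝ) * cc θ).im)| := by
          congr 1; ring
      _ ≤ 1 / (-Real.sin θ) / u := key

noncomputable def harg (θ u : ℝ) : ℝ := (1 - u * cc θ).arg / u

lemma phi_im (θ u : ℝ) : (phi θ u).im = harg θ u := by
  simp [phi, harg, Complex.log_im]

lemma intervalIntegrable_harg {θ : ℝ} (h0 : 0 < θ) (h2 : θ < 2 * Real.pi) {R : ℝ} (hR : 0 ≤ R) :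
    IntervalIntegrable (harg θ) MeasureTheory.volume 0 R := by
  have h := intervalIntegrable_phi h0 h2 hR
  have heq : harg θ = fun u => (phi θ u).im := funext fun u => (phi_im θ u).symm
  rw [heq]
  exact ⟨h.1.im, h.2.im⟩

lemma small_int {θ : ℝ} (h0 : 0 < θ) (h2 : θ < 2 * Real.pi) {R : ℝ}
    (hR0 : 0 ≤ R) (hR1 : R ≤ 1) :
    |∫ u in (0:ℝ)..R, harg θ u| ≤ (min 1 (1 - Real.cos θ))⁻¹ := by
  set D := (min 1 (1 - Real.cos θ))⁻¹ with hD
  have hDpos : 0 < D := by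
    rw [hD]
    exact inv_pos.mpr (lt_min one_pos (by linarith [cos_lt_one h0 h2]))
  have hb : ∀ x ∈ Set.uIoc (0:ℝ) R, ‖harg θ x‖ ≤ D := by
    intro x hx
    rw [Set.uIoc_of_le hR0] at hx
    have hx0 : 0 < x := hx.1
    have hx1 : x ≤ 1 := le_trans hx.2 hR1
    rw [Real.norm_eq_abs, harg, abs_div, _root_.abs_of_pos hx0]
    rw [div_le_iff₀ hx0]
    calc |(1 - (x:ℝ) * cc θ).arg| ≤ D * x := near_bound h0 h2 hx0 hx1
      _ = D * x := rfl
  calc |∫ u in (0:ℝ)..R, harg θ u| ≤ D * |R - 0| :=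
        intervalIntegral.norm_integral_le_of_norm_le_const hb
    _ = D * R := by rw [sub_zero, _root_.abs_of_nonneg hR0]
    _ ≤ D * 1 := by nlinarith
    _ = D := mul_one D

lemma big_int {θ : ℝ} (h0 : 0 < θ) (h2 : θ < 2 * Real.pi) {K : ℝ} (hK : 0 < K)
    (hfar : ∀ u : ℝ, 1 ≤ u → |(1 - u * cc θ).arg - (θ - Real.pi)| ≤ K / u)
    {R : ℝ} (hR : 1 ≤ R) :
    |(∫ u in (0:ℝ)..R, harg θ u) - (θ - Real.pi) * Real.log R|
      ≤ (min 1 (1 - Real.cos θ))⁻¹ + K := by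
  have hR0 : (0:ℝ) ≤ R := le_trans zero_le_one hR
  have hint : IntervalIntegrable (harg θ) MeasureTheory.volume 0 R :=
    intervalIntegrable_harg h0 h2 hR0
  have h01 : IntervalIntegrable (harg θ) MeasureTheory.volume 0 1 :=
    hint.mono_set (by rw [Set.uIcc_of_le hR0, Set.uIcc_of_le (zero_le_one)]; exact Set.Icc_subset_Icc le_rfl hR)
  have h1R : IntervalIntegrable (harg θ) MeasureTheory.volume 1 R :=
    hint.mono_set (by rw [Set.uIcc_of_le hR0, Set.uIcc_of_le hR]; exact Set.Icc_subset_Icc zero_le_one le_rfl)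
  have hsplit : (∫ u in (0:ℝ)..R, harg θ u)
      = (∫ u in (0:ℝ)..1, harg θ u) + ∫ u in (1:ℝ)..R, harg θ u :=
    (intervalIntegral.integral_add_adjacent_intervals h01 h1R).symm
  have hinv : IntervalIntegrable (fun u : ℝ => (θ - Real.pi) / u) MeasureTheory.volume 1 R := by
    apply ContinuousOn.intervalIntegrable
    apply ContinuousOn.div continuousOn_const continuousOn_id
    intro x hx
    rw [Set.uIcc_of_le hR] at hx
    have : (0:ℝ) < x := lt_of_lt_of_le one_pos hx.1
    exact ne_of_gt this
  have hinv_val : (∫ u in (1:ℝ)..R, (θ - Real.pi) / u) = (θ - Real.pi) * Real.log R := by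
    have : (fun u : ℝ => (θ - Real.pi) / u) = fun u : ℝ => (θ - Real.pi) * u⁻¹ := by
      funext u; rw [div_eq_mul_inv]
    rw [this, intervalIntegral.integral_const_mul, integral_inv (by
      rw [Set.uIcc_of_le hR]
      intro hmem
      exact absurd hmem.1 (by norm_num)), div_one]
  have herr : |∫ u in (1:ℝ)..R, (harg θ u - (θ - Real.pi) / u)| ≤ K := by
    have hgint : IntervalIntegrable (fun u : ℝ => K / u ^ 2) MeasureTheory.volume 1 R := by
      apply ContinuousOn.intervalIntegrable
      apply ContinuousOn.div continuousOn_const (by fun_prop)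
      intro x hx
      rw [Set.uIcc_of_le hR] at hx
      have : (0:ℝ) < x := lt_of_lt_of_le one_pos hx.1
      positivity
    have hptwise : ∀ᵐ u ∂(MeasureTheory.volume.restrict (Set.uIoc (1:ℝ) R)),
        ‖harg θ u - (θ - Real.pi) / u‖ ≤ K / u ^ 2 := by
      apply MeasureTheory.ae_restrict_of_forall_mem measurableSet_uIoc
      intro u hu
      rw [Set.uIoc_of_le hR] at hu
      have hu1 : 1 ≤ u := le_of_lt hu.1
      have hu0 : 0 < u := lt_of_lt_of_le one_pos hu1
      have heq : harg θ u - (θ - Real.pi) / u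
          = ((1 - u * cc θ).arg - (θ - Real.pi)) / u := by
        rw [harg, div_sub_div_same]
      rw [Real.norm_eq_abs, heq, abs_div, _root_.abs_of_pos hu0]
      calc |(1 - (u:ℝ) * cc θ).arg - (θ - Real.pi)| / u ≤ (K / u) / u := by
            gcongr
            exact hfar u hu1
        _ = K / u ^ 2 := by rw [div_div, sq]
    have h1 := intervalIntegral.norm_integral_le_abs_of_norm_le hptwise hgint
    have h2 : (∫ u in (1:ℝ)..R, K / u ^ 2) = K - K / R := by
      have hderiv : ∀ x ∈ Set.uIcc (1:ℝ) R, HasDerivAt (fun u : ℝ => -K / u) (K / x ^ 2) x := by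
        intro x hx
        rw [Set.uIcc_of_le hR] at hx
        have hx0 : x ≠ 0 := ne_of_gt (lt_of_lt_of_le one_pos hx.1)
        have h' := (hasDerivAt_inv hx0).const_mul (-K)
        have hfeq : (fun u : ℝ => -K * u⁻¹) = fun u : ℝ => -K / u := by
          funext u; rw [div_eq_mul_inv]
        rw [hfeq] at h'
        refine h'.congr_deriv ?_
        have hx0' : (0:ℝ) < x := lt_of_lt_of_le one_pos hx.1
        rw [neg_mul_neg, div_eq_mul_inv]
      rw [intervalIntegral.integral_eq_sub_of_hasDerivAt hderiv hgint]
      field_simp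
      ring
    rw [Real.norm_eq_abs] at h1
    have habs : |∫ u in (1:ℝ)..R, K / u ^ 2| = K - K / R := by
      rw [h2]
      exact _root_.abs_of_nonneg (by
        have : K / R ≤ K := div_le_self hK.le hR
        linarith)
    calc |∫ u in (1:ℝ)..R, (harg θ u - (θ - Real.pi) / u)| ≤ K - K / R := habs ▸ h1
      _ ≤ K := by
        have : 0 < K / R := div_pos hK (lt_of_lt_of_le one_pos hR)
        linarith
  have hsub : (∫ u in (1:ℝ)..R, (harg θ u - (θ - Real.pi) / u))
      = (∫ u in (1:ℝ)..R, harg θ u) - ∫ u in (1:ℝ)..R, (θ - Real.pi) / u :=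
    intervalIntegral.integral_sub h1R hinv
  have hsmall : |∫ u in (0:ℝ)..1, harg θ u| ≤ (min 1 (1 - Real.cos θ))⁻¹ :=
    small_int h0 h2 zero_le_one le_rfl
  have h3 : (∫ u in (1:ℝ)..R, harg θ u) - (θ - Real.pi) * Real.log R
      = ∫ u in (1:ℝ)..R, (harg θ u - (θ - Real.pi) / u) := by
    rw [hsub, hinv_val]
  rw [hsplit]
  calc |(∫ u in (0:ℝ)..1, harg θ u) + (∫ u in (1:ℝ)..R, harg θ u)
        - (θ - Real.pi) * Real.log R|
      = |(∫ u in (0:ℝ)..1, harg θ u)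
        + ((∫ u in (1:ℝ)..R, harg θ u) - (θ - Real.pi) * Real.log R)| := by
        congr 1; ring
    _ ≤ |∫ u in (0:ℝ)..1, harg θ u|
        + |(∫ u in (1:ℝ)..R, harg θ u) - (θ - Real.pi) * Real.log R| := abs_add_le _ _
    _ ≤ (min 1 (1 - Real.cos θ))⁻¹ + K := add_le_add hsmall (by rw [h3]; exact herr)


lemma dilog_im {θ R : ℝ} (h0 : 0 < θ) (h2 : θ < 2 * Real.pi) (hR : 0 < R) :
    (dilog ((R:ℝ) * cc θ)).im = -∫ u in (0:ℝ)..R, harg θ u := by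
  have hfun : (fun s : ℝ => Complex.log (1 - (s:ℂ) * ((R:ℝ) * cc θ)) / (s:ℂ))
      = fun s : ℝ => R • phi θ (R * s) := by
    funext s
    by_cases hs : s = 0
    · subst hs
      simp [phi]
    · rw [phi]
      rw [Complex.real_smul]
      push_cast
      have hR' : (R:ℂ) ≠ 0 := by exact_mod_cast ne_of_gt hR
      have hs' : (s:ℂ) ≠ 0 := by exact_mod_cast hs
      have hargeq : (1 : ℂ) - (s:ℂ) * ((R:ℂ) * cc θ) = 1 - (R:ℂ) * (s:ℂ) * cc θ := by ring
      rw [hargeq]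
      field_simp
  rw [dilog, hfun, Complex.neg_im, intervalIntegral.integral_smul,
    intervalIntegral.smul_integral_comp_mul_left (phi θ) R, mul_zero, mul_one]
  rw [intervalIntegral_im (intervalIntegrable_phi h0 h2 hR.le)]
  congr 1
  exact intervalIntegral.integral_congr fun u _ => phi_im θ u

lemma re_div_twoPiI (w : ℂ) :
    (w / (2 * (Real.pi:ℂ) * Complex.I)).re = w.im / (2 * Real.pi) := by
  have hπ : ((2 * Real.pi : ℝ) : ℂ) ≠ 0 := by
    simp [Real.pi_ne_zero]
  have h : w / (2 * (Real.pi:ℂ) * Complex.I) = (w * (-Complex.I)) / ((2 * Real.pi : ℝ) : ℂ) := by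
    have h1 : (2 * (Real.pi:ℂ) * Complex.I) = ((2 * Real.pi : ℝ) : ℂ) * Complex.I := by
      push_cast; ring
    rw [h1, ← div_div, Complex.div_I]
    ring
  rw [h, Complex.div_ofReal_re]
  congr 1
  simp [Complex.mul_re]

lemma exp_eq {t X : ℝ} :
    Complex.exp (2 * (Real.pi:ℂ) * Complex.I * ((t:ℂ) + (X:ℂ) * Complex.I))
      = ((Real.exp (-(2 * Real.pi * X)) : ℝ) : ℂ) * cc (2 * Real.pi * t) := by
  rw [cc, Complex.ofReal_exp, ← Complex.exp_add]
  congr 1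
  push_cast
  ring_nf
  rw [Complex.I_sq]
  ring

end DilogAux

open DilogAux

/-- For `0 < t < 1`, there is `C > 0` with
`|Re(Li₂(e^{2πi(t+Xi)})/(2πi)) - (0 if X ≥ 0, else 2π(t-1/2)X)| < C` for all real `X`. -/
theorem re_dilog_estimate (t : ℝ) (ht0 : 0 < t) (ht1 : t < 1) :
    ∃ C : ℝ, 0 < C ∧ ∀ X : ℝ,
      |(dilog (Complex.exp (2 * Real.pi * Complex.I * ((t:ℂ) + (X:ℂ) * Complex.I))) /
          (2 * Real.pi * Complex.I)).re
        - (if 0 ≤ X then 0 else 2 * Real.pi * (t - 1/2) * X)| < C := by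
  have hπ := Real.pi_pos
  set θ := 2 * Real.pi * t with hθdef
  have h0 : 0 < θ := by positivity
  have h2 : θ < 2 * Real.pi := by rw [hθdef]; nlinarith
  obtain ⟨K, hK, hfar⟩ := far_bound h0 h2
  set D := (min 1 (1 - Real.cos θ))⁻¹ with hD
  have hDpos : 0 < D := inv_pos.mpr (lt_min one_pos (by linarith [cos_lt_one h0 h2]))
  refine ⟨(D + K) / (2 * Real.pi) + 1, by positivity, fun X => ?_⟩
  set R := Real.exp (-(2 * Real.pi * X)) with hRdef
  have hRpos : 0 < R := Real.exp_pos _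
  rw [exp_eq, re_div_twoPiI, dilog_im h0 h2 hRpos]
  set J := ∫ u in (0:ℝ)..R, harg θ u with hJ
  by_cases hX : 0 ≤ X
  · rw [if_pos hX]
    have hR1 : R ≤ 1 := Real.exp_le_one_iff.mpr (by nlinarith)
    have hsm := small_int h0 h2 hRpos.le hR1
    rw [sub_zero]
    have habs : |(-J) / (2 * Real.pi)| = |J| / (2 * Real.pi) := by
      rw [abs_div, abs_neg, _root_.abs_of_pos (by positivity : (0:ℝ) < 2 * Real.pi)]
    calc |(-J) / (2 * Real.pi)| = |J| / (2 * Real.pi) := habs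
      _ ≤ D / (2 * Real.pi) := by
          apply div_le_div_of_nonneg_right hsm (by positivity) |>.trans_eq rfl
      _ < (D + K) / (2 * Real.pi) + 1 := by
          have h1 : D / (2 * Real.pi) ≤ (D + K) / (2 * Real.pi) := by
            apply div_le_div_of_nonneg_right (by linarith) (by positivity) |>.trans_eq rfl
          linarith
  · rw [if_neg hX]
    push_neg at hX
    have hR1 : 1 ≤ R := by
      rw [hRdef]
      calc (1:ℝ) = Real.exp 0 := Real.exp_zero.symm
        _ ≤ Real.exp (-(2 * Real.pi * X)) := Real.exp_le_exp.mpr (by nlinarith)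
    have hb := big_int h0 h2 hK hfar hR1
    have hlog : Real.log R = -(2 * Real.pi * X) := Real.log_exp _
    have htarget : 2 * Real.pi * (t - 1/2) * X
        = -((θ - Real.pi) * Real.log R) / (2 * Real.pi) := by
      rw [hlog, hθdef]
      field_simp
    rw [htarget]
    have hcomb : (-J) / (2 * Real.pi) - -((θ - Real.pi) * Real.log R) / (2 * Real.pi)
        = -(J - (θ - Real.pi) * Real.log R) / (2 * Real.pi) := by ring
    rw [hcomb]
    rw [abs_div, abs_neg, _root_.abs_of_pos (by positivity : (0:ℝ) < 2 * Real.pi)]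
    calc |J - (θ - Real.pi) * Real.log R| / (2 * Real.pi) ≤ (D + K) / (2 * Real.pi) := by
          apply div_le_div_of_nonneg_right hb (by positivity) |>.trans_eq rfl
      _ < (D + K) / (2 * Real.pi) + 1 := by linarith
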